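/- Let p be a prime, let S be a finite commutative semigroup such that exp(S) is a power of p, and let R be a commutative unitary ring of characteristic p. If T = s_1⋯s_ℓ is a sequence over S with ℓ ≥ Λ(S), then (X^{s_1} − X^{e(s_1)})⋯(X^{s_ℓ} − X^{e(s_ℓ)}) = 0 in R[X;S], and moreover St(e) ∩ Σ(T) ≠ ∅, where e = e(s_1) + ⋯ + e(s_ℓ). -/

import Mathlib

namespace ZS

variable (S : Type*) [AddCommSemigroup S]

/-- `nsmul' n x = (n+1)·x`, iterated addition in a semigroup. -/
def nsmul' : ℕ → S → S
  | 0, x => x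
  | n + 1, x => x + nsmul' n x

/-- The cyclic subsemigroup `⟨x⟩ = {x, 2x, 3x, …}` generated by `x`. -/
def cyc (x : S) : Set S := Set.range fun n => nsmul' S n x

/-- `x` is periodic if `⟨x⟩` is finite. -/
def IsPeriodicElem (x : S) : Prop := (cyc S x).Finite

/-- A semigroup is periodic if every element is periodic. -/
def IsPeriodicSemigroup : Prop := ∀ x : S, IsPeriodicElem S x

/-- `ρ(x)`: the least `m ≥ 1` such that `m·x` is idempotent (equivalently `m·x = e(x)`). -/
noncomputable def rho (x : S) : ℕ :=
  sInf {n : ℕ | nsmul' S n x + nsmul' S n x = nsmul' S n x} + 1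

/-- `e(x)`: the unique idempotent of the finite cyclic semigroup `⟨x⟩`. -/
noncomputable def eIdem (x : S) : S :=
  nsmul' S (sInf {n : ℕ | nsmul' S n x + nsmul' S n x = nsmul' S n x}) x

/-- The period of a (periodic) element `x`: the least `n > 0` with `(m+n)x = mx` for some `m`. -/
noncomputable def period (x : S) : ℕ :=
  sInf {n : ℕ | 0 < n ∧ ∃ m : ℕ, nsmul' S (m + n) x = nsmul' S m x}

/-- The index of a (periodic) element `x`: the least `k ≥ 1` with `kx = tx` for some `t ≠ k`. -/
noncomputable def indexOf (x : S) : ℕ :=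
  sInf {k : ℕ | ∃ t : ℕ, t ≠ k ∧ nsmul' S k x = nsmul' S t x} + 1

/-- `exp(S)`: the lcm of the periods of the elements of `S`, described as the least positive
common multiple of all the periods. -/
noncomputable def expS : ℕ := sInf {n : ℕ | 0 < n ∧ ∀ x : S, period S x ∣ n}

/-- `K` is a splitting field for exponent `n`: it contains exactly `n` `n`-th roots of unity. -/
def SplitField (K : Type*) [Field K] (n : ℕ) : Prop := Set.ncard {ζ : K | ζ ^ n = 1} = n

/-- Green's preorder `a ≼_𝓗 b`. -/
def gLe (a b : S) : Prop := a = b ∨ ∃ c : S, a = b + c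

/-- Green's congruence `a 𝓗 b`. -/
def gEq (a b : S) : Prop := gLe S a b ∧ gLe S b a

/-- `a ≺_𝓗 b`. -/
def gLt (a b : S) : Prop := gLe S a b ∧ ¬ gLe S b a

/-- The Green class `H_a`. -/
def HClass (a : S) : Set S := {x : S | gEq S x a}

/-- The stabilizer `St(H_a)` of the Green class of `a`. -/
def stab (a : S) : Set S := {c : S | ∀ x ∈ HClass S a, c + x ∈ HClass S a}

theorem gLe_trans {a b c : S} (h1 : gLe S a b) (h2 : gLe S b c) : gLe S a c := by
  rcases h1 with rfl | ⟨u, rfl⟩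
  · exact h2
  · rcases h2 with rfl | ⟨v, rfl⟩
    · exact Or.inr ⟨u, rfl⟩
    · exact Or.inr ⟨v + u, by rw [add_assoc]⟩

theorem gLe_add_right {a b : S} (x : S) (h : gLe S a b) : gLe S (a + x) (b + x) := by
  rcases h with rfl | ⟨c, rfl⟩
  · exact Or.inl rfl
  · exact Or.inr ⟨c, by rw [add_right_comm]⟩

theorem gEq_add {w x y z : S} (h1 : gEq S w x) (h2 : gEq S y z) : gEq S (w + y) (x + z) := by
  have k1 : gLe S (w + y) (x + y) := gLe_add_right S y h1.1
  have k2 : gLe S (x + y) (x + z) := by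
    have h := gLe_add_right S x h2.1
    rwa [add_comm z x, add_comm y x] at h
  have k3 : gLe S (x + z) (w + z) := gLe_add_right S z h1.2
  have k4 : gLe S (w + z) (w + y) := by
    have h := gLe_add_right S w h2.2
    rwa [add_comm z w, add_comm y w] at h
  exact ⟨gLe_trans S k1 k2, gLe_trans S k3 k4⟩

/-- Green's congruence as an additive congruence. -/
def greenCon : AddCon S where
  r a b := gEq S a b
  iseqv := ⟨fun _ => ⟨Or.inl rfl, Or.inl rfl⟩, fun h => ⟨h.2, h.1⟩,
    fun h1 h2 => ⟨gLe_trans S h1.1 h2.1, gLe_trans S h2.2 h1.2⟩⟩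
  add' h1 h2 := gEq_add S h1 h2

/-- The quotient semigroup `S/𝓗`. -/
abbrev GQuot := (greenCon S).Quotient

/-- The canonical epimorphism `S → S/𝓗`, `a ↦ ā`. -/
def gq (a : S) : GQuot S := (a : (greenCon S).Quotient)

/-- The sum of a sequence (multiset) of elements of `S`, computed in `WithZero S`
(the empty sequence having sum the adjoined zero). -/
def msum (T : Multiset S) : WithZero S := (T.map fun x => (x : WithZero S)).sum

/-- A sequence over a commutative semigroup is (additively) reducible if some proper
(possibly empty) subsequence has the same sum; the empty sequence has sum the identity of `S`,
when `S` has one. -/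
def IsReducible (T : Multiset S) : Prop :=
  (∃ T' : Multiset S, T' ≤ T ∧ T' ≠ T ∧ T' ≠ 0 ∧ msum S T' = msum S T) ∨
    (T ≠ 0 ∧ ∃ z : S, msum S T = ↑z ∧ ∀ s : S, z + s = s)

/-- The Davenport constant `D(S)` of a commutative semigroup. -/
noncomputable def Dav : ℕ∞ :=
  sInf {n : ℕ∞ | ∀ T : Multiset S, (T.card : ℕ∞) ≥ n → IsReducible S T}

/-- The relative Davenport constant `D_a(S)`: the largest length of an additively
irreducible sequence with sum `a`. -/
noncomputable def Drel (a : S) : ℕ∞ :=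
  sSup {n : ℕ∞ | ∃ T : Multiset S,
    T ≠ 0 ∧ ¬ IsReducible S T ∧ msum S T = ↑a ∧ n = (T.card : ℕ∞)}

/-- The Erdős–Burgess constant `I(S)`: the smallest `ℓ` such that every sequence over `S` of
length (at least) `ℓ` has a nonempty subsequence with idempotent sum. -/
noncomputable def EB : ℕ∞ :=
  sInf {n : ℕ∞ | ∀ T : Multiset S, (T.card : ℕ∞) ≥ n →
    ∃ T' : Multiset S, T' ≤ T ∧ T' ≠ 0 ∧ ∃ x : S, msum S T' = ↑x ∧ x + x = x}

/-- The Davenport constant of a (semigroup which is a) group: the smallest `ℓ` such that every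
sequence of length (at least) `ℓ` has a nonempty subsequence whose sum is the identity element. -/
noncomputable def DavGrpSet : ℕ∞ :=
  sInf {n : ℕ∞ | ∀ T : Multiset S, (T.card : ℕ∞) ≥ n →
    ∃ T' : Multiset S, T' ≤ T ∧ T' ≠ 0 ∧ ∃ z : S, msum S T' = ↑z ∧ ∀ x : S, z + x = x}

/-- The Davenport constant of a finite abelian group. -/
noncomputable def DavG (G : Type*) [AddCommMonoid G] : ℕ∞ :=
  sInf {n : ℕ∞ | ∀ T : Multiset G, (T.card : ℕ∞) ≥ n →
    ∃ T' : Multiset G, T' ≤ T ∧ T' ≠ 0 ∧ T'.sum = 0}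

/-- `ψ(a)`: the largest length of a strictly ascending chain of principal ideals starting at
`(a)`. -/
noncomputable def psi (a : S) : ℕ∞ :=
  sSup {n : ℕ∞ | ∃ ℓ : ℕ, n = (ℓ : ℕ∞) ∧
    ∃ c : ℕ → S, c 0 = a ∧ ∀ i < ℓ, gLt S (c i) (c (i + 1))}

/-- `Ψ(S)`: the largest length of a strictly ascending chain of principal ideals of `S`. -/
noncomputable def PsiS : ℕ∞ := ⨆ a : S, psi S a

/-- A subset of a semigroup which is a subgroup: closed under addition, with an identity
and inverses. -/
def IsSubgroupSet (T : Set S) : Prop :=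
  (∀ x ∈ T, ∀ y ∈ T, x + y ∈ T) ∧
    ∃ z ∈ T, (∀ x ∈ T, z + x = x) ∧ ∀ x ∈ T, ∃ y ∈ T, x + y = z

open Classical in
/-- `ε_a`: `0` if `⟨a⟩` is a group, `1` otherwise. -/
noncomputable def eps (a : S) : ℕ∞ := if IsSubgroupSet S (cyc S a) then 0 else 1

/-- The Schützenberger maps on the Green class `H_a`: maps `x ↦ c + x` for `c ∈ St(H_a)`. -/
def GammaSet (a : S) : Set (↥(HClass S a) → ↥(HClass S a)) :=
  {f | ∃ c ∈ stab S a, ∀ x : ↥(HClass S a), (↑(f x) : S) = c + ↑x}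

/-- The Schützenberger group `Γ(H_a)` (as a type; it is empty when `St(H_a) = ∅`). -/
def Gamma (a : S) : Type _ := ↥(GammaSet S a)

instance (a : S) : Add (Gamma S a) :=
  ⟨fun f g => ⟨f.1 ∘ g.1, by
    obtain ⟨c, hc, hfc⟩ := f.2
    obtain ⟨d, hd, hgd⟩ := g.2
    refine ⟨c + d, fun x hx => by rw [add_assoc]; exact hc _ (hd x hx), fun x => ?_⟩
    show (↑(f.1 (g.1 x)) : S) = c + d + ↑x
    rw [hfc (g.1 x), hgd x, add_assoc]⟩⟩

instance (a : S) : AddCommSemigroup (Gamma S a) where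
  add_assoc f g h := Subtype.ext rfl
  add_comm f g := by
    obtain ⟨c, hc, hfc⟩ := f.2
    obtain ⟨d, hd, hgd⟩ := g.2
    apply Subtype.ext
    funext x
    apply Subtype.ext
    show (↑(f.1 (g.1 x)) : S) = ↑(g.1 (f.1 x))
    rw [hfc (g.1 x), hgd x, hgd (f.1 x), hfc x, add_left_comm]

/-- `St(H_a)` as a subsemigroup of `S`. -/
def stabSub (a : S) : AddSubsemigroup S where
  carrier := stab S a
  add_mem' := fun {c d} hc hd x hx => by rw [add_assoc]; exact hc _ (hd x hx)

/-- The canonical surjection `π_a : St(H_a) → Γ(H_a)`, `c ↦ γ_c`. -/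
def gammaMap (a : S) (c : ↥(stabSub S a)) : Gamma S a :=
  ⟨fun x => ⟨(↑c : S) + ↑x, c.2 ↑x x.2⟩, ⟨↑c, c.2, fun _ => rfl⟩⟩

/-- The semigroup algebra `R[X;S]` of a commutative semigroup, realized inside the monoid
algebra of the monoid obtained from `S` by adjoining an identity element. -/
abbrev SAlg (R : Type*) [CommRing R] (S : Type*) [AddCommSemigroup S] :=
  AddMonoidAlgebra R (WithZero S)

/-- The monomial `r·X^s` of the semigroup algebra. -/
noncomputable def Xm (R : Type*) [CommRing R] {S : Type*} [AddCommSemigroup S] (s : S) (r : R) :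
    SAlg R S := AddMonoidAlgebra.single (↑s) r

/-- The factor `X^s - a·X^{e(s)}` of the semigroup algebra. -/
noncomputable def facX (R : Type*) [CommRing R] {S : Type*} [AddCommSemigroup S]
    (s : S) (a : R) : SAlg R S := Xm R s 1 - Xm R (eIdem S s) a

/-- The invariant `d(S,R)`: the supremum of all `ℓ` such that some sequence `s_1,…,s_ℓ` over
`S` satisfies `(X^{s_1} - a_1 X^{e(s_1)}) ⋯ (X^{s_ℓ} - a_ℓ X^{e(s_ℓ)}) ≠ 0` in `R[X;S]` for all
nonzero `a_1, …, a_ℓ ∈ R`. -/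
noncomputable def dd (R : Type*) [CommRing R] (S : Type*) [AddCommSemigroup S] : ℕ∞ :=
  sSup {n : ℕ∞ | ∃ ℓ : ℕ, n = (ℓ : ℕ∞) ∧ ∃ s : Fin ℓ → S,
    ∀ a : Fin ℓ → R, (∀ i, a i ≠ 0) → ∏ i, facX R (s i) (a i) ≠ 0}

/-- `Λ(S)`: the minimum over all generating sets `A` of `S` of `1 + Σ_{a∈A} (ρ(a)-1)`. -/
noncomputable def Lam (S : Type*) [AddCommSemigroup S] : ℕ :=
  sInf {n : ℕ | ∃ A : Finset S,
    AddSubsemigroup.closure (↑A : Set S) = ⊤ ∧ n = 1 + ∑ a ∈ A, (rho S a - 1)}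

/-- An elementary semigroup: an ideal extension of a nilsemigroup `N` by a group with zero
`G ∪ {∞}`. -/
def IsElementary : Prop :=
  ∃ G N : Set S, G ∪ N = Set.univ ∧ Disjoint G N ∧ IsSubgroupSet S G ∧
    (∀ x ∈ N, ∀ s : S, s + x ∈ N) ∧
    ∃ z ∈ N, (∀ s : S, s + z = z) ∧ ∀ x ∈ N, ∃ n : ℕ, nsmul' S n x = z


section Aux
variable {S}

lemma nsmul'_succ (n : ℕ) (x : S) : nsmul' S (n + 1) x = x + nsmul' S n x := rfl

lemma nsmul'_add_index (x : S) (m n : ℕ) :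
    nsmul' S (m + n + 1) x = nsmul' S m x + nsmul' S n x := by
  induction m with
  | zero => simp [nsmul'_succ, nsmul']
  | succ k ih =>
      have h : k + 1 + n + 1 = (k + n + 1) + 1 := by omega
      rw [h, nsmul'_succ, ih, nsmul'_succ, add_assoc]

lemma nsmul'_distrib (a b : S) (n : ℕ) :
    nsmul' S n (a + b) = nsmul' S n a + nsmul' S n b := by
  induction n with
  | zero => rfl
  | succ k ih => rw [nsmul'_succ, nsmul'_succ, nsmul'_succ, ih, add_add_add_comm]

lemma nsmul'_propagate (x : S) (m d : ℕ) (h : nsmul' S (m + d) x = nsmul' S m x) :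
    ∀ r, nsmul' S (m + r + d) x = nsmul' S (m + r) x := by
  intro r
  induction r with
  | zero => simpa using h
  | succ k ih =>
      have e1 : m + (k + 1) + d = (m + k + d) + 1 := by omega
      have e2 : m + (k + 1) = (m + k) + 1 := by omega
      rw [e1, nsmul'_succ, ih, e2, nsmul'_succ]

lemma nsmul'_period_mul (x : S) (m d : ℕ) (h : nsmul' S (m + d) x = nsmul' S m x) (k : ℕ) :
    nsmul' S (m + k * d) x = nsmul' S m x := by
  induction k with
  | zero => simp
  | succ j ih =>
      have e1 : m + (j + 1) * d = (m + j * d) + d := by ring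
      have h2 := nsmul'_propagate x m d h (j * d)
      rw [e1]
      calc nsmul' S (m + j * d + d) x = nsmul' S (m + j * d) x := h2
        _ = nsmul' S m x := ih

lemma exists_idem [Finite S] (x : S) :
    ∃ n, nsmul' S n x + nsmul' S n x = nsmul' S n x := by
  obtain ⟨i, j, hne, hij⟩ := Finite.exists_ne_map_eq_of_infinite (fun n : ℕ => nsmul' S n x)
  wlog hlt : i < j generalizing i j
  · exact this j i hne.symm hij.symm (by omega)
  obtain ⟨d, hdpos, hper⟩ : ∃ d, 0 < d ∧ nsmul' S (i + d) x = nsmul' S i x := by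
    refine ⟨j - i, by omega, ?_⟩
    have h : i + (j - i) = j := by omega
    rw [h, hij]
  obtain ⟨n, hn1, hni⟩ : ∃ n, n + 1 = (i + 1) * d ∧ i ≤ n := by
    have hA : i + 1 ≤ (i + 1) * d := Nat.le_mul_of_pos_right _ hdpos
    exact ⟨(i + 1) * d - 1, by omega, by omega⟩
  have hbase : nsmul' S (n + d) x = nsmul' S n x := by
    have h := nsmul'_propagate x i d hper (n - i)
    have e : i + (n - i) = n := by omega
    rwa [e] at h
  refine ⟨n, ?_⟩
  rw [← nsmul'_add_index]
  have e2 : n + n + 1 = n + (i + 1) * d := by omega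
  rw [e2]
  exact nsmul'_period_mul x n d hbase (i + 1)

lemma idemSet_nonempty [Finite S] (x : S) :
    {n : ℕ | nsmul' S n x + nsmul' S n x = nsmul' S n x}.Nonempty := exists_idem x

lemma rho_pos (x : S) : 0 < rho S x := Nat.succ_pos _

lemma nsmul'_rho_sub_one [Finite S] (x : S) :
    nsmul' S (rho S x - 1) x = eIdem S x := by
  simp [rho, eIdem]

lemma eIdem_idem [Finite S] (x : S) : eIdem S x + eIdem S x = eIdem S x :=
  Nat.sInf_mem (idemSet_nonempty x)

lemma rho_idem [Finite S] (x : S) :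
    nsmul' S (rho S x - 1) x + nsmul' S (rho S x - 1) x = nsmul' S (rho S x - 1) x := by
  rw [nsmul'_rho_sub_one]; exact eIdem_idem x

lemma idem_absorb (x : S) (n : ℕ) (h : nsmul' S n x + nsmul' S n x = nsmul' S n x) (m : ℕ) :
    nsmul' S (n + m * (n + 1)) x = nsmul' S n x := by
  apply nsmul'_period_mul
  have e : n + (n + 1) = n + n + 1 := by omega
  rw [e, nsmul'_add_index, h]

lemma idem_unique (x : S) (i j : ℕ)
    (hi : nsmul' S i x + nsmul' S i x = nsmul' S i x)
    (hj : nsmul' S j x + nsmul' S j x = nsmul' S j x) :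
    nsmul' S i x = nsmul' S j x := by
  have h1 := idem_absorb x i hi j
  have h2 := idem_absorb x j hj i
  have e : i + j * (i + 1) = j + i * (j + 1) := by ring
  rw [e, h2] at h1
  exact h1.symm

lemma eIdem_add [Finite S] (x y : S) : eIdem S (x + y) = eIdem S x + eIdem S y := by
  set n0 := rho S x - 1 with hn0
  set m0 := rho S y - 1 with hm0
  have hx1 : nsmul' S (n0 + m0 * (n0 + 1)) x = eIdem S x := by
    rw [idem_absorb x n0 (rho_idem x) m0, nsmul'_rho_sub_one]
  have hy1 : nsmul' S (m0 + n0 * (m0 + 1)) y = eIdem S y := by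
    rw [idem_absorb y m0 (rho_idem y) n0, nsmul'_rho_sub_one]
  have eN : m0 + n0 * (m0 + 1) = n0 + m0 * (n0 + 1) := by ring
  rw [eN] at hy1
  have hsum : nsmul' S (n0 + m0 * (n0 + 1)) (x + y) = eIdem S x + eIdem S y := by
    rw [nsmul'_distrib, hx1, hy1]
  have hidN : nsmul' S (n0 + m0 * (n0 + 1)) (x + y) + nsmul' S (n0 + m0 * (n0 + 1)) (x + y)
      = nsmul' S (n0 + m0 * (n0 + 1)) (x + y) := by
    rw [hsum, add_add_add_comm, eIdem_idem, eIdem_idem]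
  have h := idem_unique (x + y) (rho S (x + y) - 1) (n0 + m0 * (n0 + 1))
    (rho_idem (x + y)) hidN
  rw [nsmul'_rho_sub_one, hsum] at h
  exact h

lemma rho_mem_periodSet [Finite S] (x : S) :
    0 < rho S x ∧ ∃ m, nsmul' S (m + rho S x) x = nsmul' S m x := by
  refine ⟨rho_pos x, ⟨rho S x - 1, ?_⟩⟩
  have h := idem_absorb x (rho S x - 1) (rho_idem x) 1
  rw [one_mul] at h
  have e : rho S x - 1 + rho S x = rho S x - 1 + (rho S x - 1 + 1) := by
    have := rho_pos x; omega
  rw [e]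
  exact h

lemma period_pos [Finite S] (x : S) : 0 < period S x :=
  (Nat.sInf_mem (⟨rho S x, rho_mem_periodSet x⟩ :
    Set.Nonempty {n : ℕ | 0 < n ∧ ∃ m : ℕ, nsmul' S (m + n) x = nsmul' S m x})).1

lemma period_spec [Finite S] (x : S) :
    ∃ m, nsmul' S (m + period S x) x = nsmul' S m x :=
  (Nat.sInf_mem (⟨rho S x, rho_mem_periodSet x⟩ :
    Set.Nonempty {n : ℕ | 0 < n ∧ ∃ m : ℕ, nsmul' S (m + n) x = nsmul' S m x})).2

lemma period_le_rho [Finite S] (x : S) : period S x ≤ rho S x :=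
  Nat.sInf_le (rho_mem_periodSet x)

lemma period_dvd_expS [Fintype S] (x : S) : period S x ∣ expS S := by
  have hne : {n : ℕ | 0 < n ∧ ∀ y : S, period S y ∣ n}.Nonempty := by
    refine ⟨∏ y : S, period S y, Finset.prod_pos fun y _ => period_pos y,
      fun y => Finset.dvd_prod_of_mem _ (Finset.mem_univ y)⟩
  exact (Nat.sInf_mem hne).2 x

lemma nsmul'_of_idem (e : S) (h : e + e = e) (n : ℕ) : nsmul' S n e = e := by
  induction n with
  | zero => rfl
  | succ k ih => rw [nsmul'_succ, ih, h]

lemma period_nsmul_add_eIdem [Finite S] (x : S) :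
    nsmul' S (period S x - 1) (x + eIdem S x) = eIdem S x := by
  obtain ⟨m, hm⟩ := period_spec x
  have hd : 0 < period S x := period_pos x
  obtain ⟨M, hMi, hMm⟩ : ∃ M, nsmul' S M x = eIdem S x ∧ m ≤ M := by
    refine ⟨rho S x - 1 + m * (rho S x - 1 + 1), ?_, ?_⟩
    · rw [idem_absorb x _ (rho_idem x) m, nsmul'_rho_sub_one]
    · calc m ≤ m * (rho S x - 1 + 1) := Nat.le_mul_of_pos_right _ (Nat.succ_pos _)
        _ ≤ _ := Nat.le_add_left _ _
  have hMd : nsmul' S (M + period S x) x = nsmul' S M x := by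
    have h := nsmul'_propagate x m (period S x) hm (M - m)
    have e : m + (M - m) = M := by omega
    rw [e] at h
    exact h
  calc nsmul' S (period S x - 1) (x + eIdem S x)
      = nsmul' S (period S x - 1) x + nsmul' S (period S x - 1) (eIdem S x) :=
        nsmul'_distrib _ _ _
    _ = nsmul' S (period S x - 1) x + nsmul' S M x := by
        rw [nsmul'_of_idem _ (eIdem_idem x), hMi]
    _ = nsmul' S ((period S x - 1) + M + 1) x := (nsmul'_add_index x _ _).symm
    _ = nsmul' S (M + period S x) x := by congr 1; omega
    _ = eIdem S x := by rw [hMd, hMi]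

lemma rho_nsmul_add_eIdem [Finite S] (x : S) :
    nsmul' S (rho S x - 1) (x + eIdem S x) = eIdem S x := by
  rw [nsmul'_distrib, nsmul'_rho_sub_one, nsmul'_of_idem _ (eIdem_idem x), eIdem_idem]

end Aux
section Ring
variable {S} (R : Type*) [CommRing R]

lemma charP_SAlg (p : ℕ) [CharP R p] : CharP (SAlg R S) p :=
  charP_of_injective_ringHom (f := AddMonoidAlgebra.singleZeroRingHom)
    (fun x y h => by
      have := congrArg (fun f => f.coeff 0) h
      simpa [AddMonoidAlgebra.singleZeroRingHom, AddMonoidAlgebra.coeff_single] using this) p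

lemma Xm_mul (a b : S) : Xm R a 1 * Xm R b 1 = Xm R (a + b) 1 := by
  simp [Xm, AddMonoidAlgebra.single_mul_single, ← WithZero.coe_add]

lemma coe_nsmul' (a : S) (n : ℕ) :
    ((n + 1) • (↑a : WithZero S)) = ↑(nsmul' S n a) := by
  induction n with
  | zero => rw [zero_add, one_nsmul]; rfl
  | succ k ih =>
      rw [succ_nsmul, ih, nsmul'_succ, WithZero.coe_add, add_comm]

lemma Xm_pow (a : S) (n : ℕ) : Xm R a 1 ^ (n + 1) = Xm R (nsmul' S n a) 1 := by
  simp [Xm, AddMonoidAlgebra.single_pow, coe_nsmul', one_pow]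

lemma facX_pow_rho [Finite S] {p : ℕ} (hp : p.Prime) [CharP R p] {t : ℕ}
    (x : S) (hper : period S x ∣ p ^ t) :
    facX R x 1 ^ rho S x = 0 := by
  haveI : CharP (SAlg R S) p := charP_SAlg R p
  haveI : Fact p.Prime := ⟨hp⟩
  set u : SAlg R S := Xm R (eIdem S x) 1 with hudef
  set y : SAlg R S := Xm R x 1 with hydef
  set w : SAlg R S := Xm R (x + eIdem S x) 1 with hwdef
  have h1 : rho S x = (rho S x - 1) + 1 := by have := rho_pos (S := S) x; omega
  have h2 : period S x = (period S x - 1) + 1 := by have := period_pos (S := S) x; omega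
  have hidem : u * u = u := by rw [hudef, Xm_mul, eIdem_idem]
  have hyu : u * y = w := by rw [hudef, hydef, Xm_mul, add_comm]
  have hypow : y ^ rho S x = u := by rw [h1, hydef, Xm_pow, nsmul'_rho_sub_one]
  have hwd : w ^ period S x = u := by rw [h2, hwdef, Xm_pow, period_nsmul_add_eIdem]
  have hf : facX R x 1 = y - u := rfl
  have upow : ∀ n : ℕ, u ^ (n + 1) = u := by
    intro n
    induction n with
    | zero => simp
    | succ k ih => rw [pow_succ, ih, hidem]
  obtain ⟨c, hc⟩ : (u : SAlg R S) ∣ facX R x 1 ^ rho S x - y ^ rho S x := by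
    have h3 := sub_dvd_pow_sub_pow (facX R x 1) y (rho S x)
    have h4 : facX R x 1 - y = -u := by rw [hf]; ring
    rw [h4, neg_dvd] at h3
    exact h3
  have e5 : facX R x 1 ^ rho S x = u * (1 + c) := by
    have h6 : facX R x 1 ^ rho S x = y ^ rho S x + u * c := by linear_combination hc
    rw [h6, hypow]; ring
  have key : (u * facX R x 1) ^ rho S x = facX R x 1 ^ rho S x := by
    rw [mul_pow]
    have h6 : u ^ rho S x = u := by rw [h1]; exact upow _
    rw [h6, e5, ← mul_assoc, hidem]
  have huf : u * facX R x 1 = w - u := by rw [hf, mul_sub, hyu, hidem]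
  obtain ⟨j, hj, hdj⟩ := (Nat.dvd_prime_pow hp).mp hper
  have hnil : (w - u) ^ period S x = 0 := by
    have hud : u ^ period S x = u := by rw [h2]; exact upow _
    rw [hdj, sub_pow_char_pow, ← hdj, hwd, hud, sub_self]
  have hle : period S x ≤ rho S x := period_le_rho x
  rw [← key, huf, show rho S x = (rho S x - period S x) + period S x from by omega,
    pow_add, hnil, mul_zero]

lemma facX_add_decomp [Finite S] (x y : S) :
    facX R (x + y) 1 = Xm R y 1 * facX R x 1 + Xm R (eIdem S x) 1 * facX R y 1 := by
  simp only [facX, mul_sub, Xm_mul]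
  rw [eIdem_add, show y + x = x + y from add_comm y x,
    show eIdem S x + y = y + eIdem S x from add_comm _ _]
  exact (sub_add_sub_cancel _ _ _).symm

end Ring

section Ideals
variable {S} (R : Type*) [CommRing R]

lemma my_add_pow_le {T : Type*} [CommRing T] (I J : Ideal T) (m n : ℕ) :
    (I ⊔ J) ^ (m + n + 1) ≤ I ^ (m + 1) ⊔ J ^ (n + 1) := by
  rw [← Ideal.add_eq_sup, ← Ideal.add_eq_sup, add_pow, Ideal.sum_eq_sup]
  apply Finset.sup_le
  intro i hi
  simp only [Finset.mem_range] at hi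
  by_cases hc : m + 1 ≤ i
  · exact Ideal.mul_le_left.trans (Ideal.mul_le_left.trans
      ((Ideal.pow_le_pow_right hc).trans le_sup_left))
  · refine Ideal.mul_le_left.trans (Ideal.mul_le_right.trans
      ((Ideal.pow_le_pow_right ?_).trans le_sup_right))
    omega

lemma facX_mem_span [Finite S] (A : Finset S)
    (hA : AddSubsemigroup.closure (↑A : Set S) = ⊤) (s : S) :
    facX R s 1 ∈ Ideal.span ((fun a : S => facX R a 1) '' ↑A) := by
  have hs : s ∈ AddSubsemigroup.closure (↑A : Set S) := by rw [hA]; trivial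
  induction hs using AddSubsemigroup.closure_induction with
  | mem a ha => exact Ideal.subset_span ⟨a, ha, rfl⟩
  | add xx yy hx hy ihx ihy =>
      rw [facX_add_decomp]
      exact Ideal.add_mem _ (Ideal.mul_mem_left _ _ ihx) (Ideal.mul_mem_left _ _ ihy)

lemma span_facX_pow_eq_bot [Finite S] {p : ℕ} (hp : p.Prime) [CharP R p] {t : ℕ}
    (hper : ∀ x : S, period S x ∣ p ^ t) (A : Finset S) :
    (Ideal.span ((fun a : S => facX R a 1) '' ↑A)) ^ (1 + ∑ a ∈ A, (rho S a - 1)) = ⊥ := by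
  classical
  induction A using Finset.induction_on with
  | empty =>
      rw [Finset.coe_empty, Set.image_empty, Ideal.span_empty, Finset.sum_empty]
      norm_num
  | @insert b A' hb ih =>
      rw [Finset.coe_insert, Set.image_insert_eq, Ideal.span_insert,
        Finset.sum_insert hb,
        show 1 + ((rho S b - 1) + ∑ a ∈ A', (rho S a - 1)) =
          (rho S b - 1) + (∑ a ∈ A', (rho S a - 1)) + 1 from by omega]
      rw [eq_bot_iff]
      refine (my_add_pow_le _ _ _ _).trans ?_
      have h1 : (Ideal.span {facX R b 1}) ^ (rho S b - 1 + 1) = ⊥ := by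
        rw [show rho S b - 1 + 1 = rho S b from by have := rho_pos (S := S) b; omega,
          Ideal.span_singleton_pow, facX_pow_rho R hp b (hper b), Ideal.span_singleton_eq_bot]
      have h2 : (Ideal.span ((fun a : S => facX R a 1) '' ↑A')) ^ (∑ a ∈ A', (rho S a - 1) + 1) = ⊥ := by
        rw [show (∑ a ∈ A', (rho S a - 1)) + 1 = 1 + ∑ a ∈ A', (rho S a - 1) from by omega]
        exact ih
      rw [h1, h2, sup_bot_eq]

lemma prod_mem_pow_card {T : Type*} [CommRing T] (I : Ideal T) {ι : Type*}
    [DecidableEq ι] (t : Finset ι)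
    (f : ι → T) (h : ∀ i ∈ t, f i ∈ I) : (∏ i ∈ t, f i) ∈ I ^ t.card := by
  induction t using Finset.induction_on with
  | empty => rw [Finset.prod_empty, Finset.card_empty, pow_zero, Ideal.one_eq_top]; trivial
  | @insert b t' hb ih =>
      rw [Finset.prod_insert hb, Finset.card_insert_of_notMem hb, pow_succ, mul_comm (I ^ t'.card) I]
      exact Ideal.mul_mem_mul (h b (Finset.mem_insert_self b t'))
        (ih fun i hi => h i (Finset.mem_insert_of_mem hi))

end Ideals

section Final
variable {S} (R : Type*) [CommRing R]

lemma prod_single_const {ι : Type*} (t : Finset ι) (v : ι → WithZero S) (r : R) :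
    (∏ i ∈ t, (AddMonoidAlgebra.single (v i) r : SAlg R S)) =
      AddMonoidAlgebra.single (∑ i ∈ t, v i) (r ^ t.card) := by
  classical
  induction t using Finset.induction_on with
  | empty => simp [AddMonoidAlgebra.one_def]
  | @insert b t' hb ih =>
      rw [Finset.prod_insert hb, Finset.sum_insert hb, ih,
        AddMonoidAlgebra.single_mul_single, Finset.card_insert_of_notMem hb, pow_succ']

lemma exists_coe_sum {ι : Type*} (t : Finset ι) (ht : t.Nonempty) (v : ι → S) :
    ∃ c : S, (∑ i ∈ t, (↑(v i) : WithZero S)) = ↑c := by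
  classical
  induction t using Finset.induction_on with
  | empty => exact absurd ht (by simp)
  | @insert b t' hb ih =>
      rcases t'.eq_empty_or_nonempty with rfl | ht'
      · exact ⟨v b, by simp⟩
      · obtain ⟨c', hc'⟩ := ih ht'
        exact ⟨v b + c', by rw [Finset.sum_insert hb, hc', WithZero.coe_add]⟩

end Final


/-- vanishing of products of length `≥ Λ(S)` in characteristic `p`. -/
theorem stmt7 (p : ℕ) (hp : p.Prime) (S : Type*) [AddCommSemigroup S] [Fintype S] [Nonempty S]
    (hexp : ∃ t : ℕ, expS S = p ^ t)
    (R : Type*) [CommRing R] [CharP R p]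
    (ℓ : ℕ) (s : Fin ℓ → S) (hl : Lam S ≤ ℓ) :
    (∏ i, facX R (s i) (1 : R)) = 0 ∧
    ∀ e : S, ((e : WithZero S) = ∑ i, (↑(eIdem S (s i)) : WithZero S)) →
      ∃ c : S, c + e = e ∧
        ∃ I : Finset (Fin ℓ), I.Nonempty ∧ (↑c : WithZero S) = ∑ i ∈ I, ↑(s i) := by
  classical
  obtain ⟨t, ht⟩ := hexp
  have hper : ∀ x : S, period S x ∣ p ^ t := fun x => ht ▸ period_dvd_expS x
  have hLne : {n : ℕ | ∃ A : Finset S, AddSubsemigroup.closure (↑A : Set S) = ⊤ ∧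
      n = 1 + ∑ a ∈ A, (rho S a - 1)}.Nonempty := by
    refine ⟨1 + ∑ a ∈ (Finset.univ : Finset S), (rho S a - 1), Finset.univ, ?_, rfl⟩
    rw [Finset.coe_univ]
    exact AddSubsemigroup.closure_univ
  obtain ⟨A, hA, hval⟩ := Nat.sInf_mem hLne
  have part1 : (∏ i, facX R (s i) (1 : R)) = 0 := by
    have hmem : (∏ i, facX R (s i) (1 : R)) ∈
        (Ideal.span ((fun a : S => facX R a 1) '' (↑A : Set S))) ^ ℓ := by
      have h := prod_mem_pow_card (Ideal.span ((fun a : S => facX R a 1) '' (↑A : Set S)))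
        (Finset.univ : Finset (Fin ℓ)) (fun i => facX R (s i) 1)
        (fun i _ => facX_mem_span R A hA (s i))
      simpa using h
    have hbot : (Ideal.span ((fun a : S => facX R a 1) '' (↑A : Set S))) ^ (Lam S) = ⊥ := by
      rw [show Lam S = 1 + ∑ a ∈ A, (rho S a - 1) from hval]
      exact span_facX_pow_eq_bot R hp hper A
    have h2 := (Ideal.pow_le_pow_right hl) hmem
    rw [hbot] at h2
    simpa using h2
  refine ⟨part1, ?_⟩
  intro e he
  by_contra hcon
  push_neg at hcon
  set F : Finset (Fin ℓ) → WithZero S := fun t' =>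
    (∑ i ∈ t', (↑(s i) : WithZero S)) +
      ∑ i ∈ Finset.univ \ t', (↑(eIdem S (s i)) : WithZero S) with hF
  have hesplit : ∀ t' : Finset (Fin ℓ), (↑e : WithZero S) =
      (∑ i ∈ Finset.univ \ t', (↑(eIdem S (s i)) : WithZero S)) +
        ∑ i ∈ t', (↑(eIdem S (s i)) : WithZero S) := by
    intro t'
    rw [he, ← Finset.sum_sdiff (Finset.subset_univ t')]
  have hidem : ∀ t' : Finset (Fin ℓ),
      (∑ i ∈ t', (↑(eIdem S (s i)) : WithZero S)) +
          ∑ i ∈ t', (↑(eIdem S (s i)) : WithZero S)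
        = ∑ i ∈ t', (↑(eIdem S (s i)) : WithZero S) := by
    intro t'
    rw [← Finset.sum_add_distrib]
    exact Finset.sum_congr rfl fun i _ => by rw [← WithZero.coe_add, eIdem_idem]
  have claim1 : ∀ t' : Finset (Fin ℓ), t'.Nonempty → F t' ≠ (↑e : WithZero S) := by
    intro t' ht' heq
    obtain ⟨c, hc⟩ := exists_coe_sum t' ht' (fun i => s i)
    have hce : (↑(c + e) : WithZero S) = ↑e := by
      rw [WithZero.coe_add, ← hc]
      calc (∑ i ∈ t', (↑(s i) : WithZero S)) + ↑e
          = (∑ i ∈ t', (↑(s i) : WithZero S)) +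
            ((∑ i ∈ Finset.univ \ t', (↑(eIdem S (s i)) : WithZero S)) +
              ∑ i ∈ t', (↑(eIdem S (s i)) : WithZero S)) := by rw [← hesplit]
        _ = F t' + ∑ i ∈ t', (↑(eIdem S (s i)) : WithZero S) := by
            rw [hF, ← add_assoc]
        _ = ↑e + ∑ i ∈ t', (↑(eIdem S (s i)) : WithZero S) := by rw [heq]
        _ = (∑ i ∈ Finset.univ \ t', (↑(eIdem S (s i)) : WithZero S)) +
            ((∑ i ∈ t', (↑(eIdem S (s i)) : WithZero S)) +
              ∑ i ∈ t', (↑(eIdem S (s i)) : WithZero S)) := by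
            rw [hesplit t', add_assoc]
        _ = (∑ i ∈ Finset.univ \ t', (↑(eIdem S (s i)) : WithZero S)) +
            ∑ i ∈ t', (↑(eIdem S (s i)) : WithZero S) := by rw [hidem]
        _ = ↑e := (hesplit t').symm
    exact hcon c (WithZero.coe_inj.mp hce) t' ht' hc.symm
  have hexp2 : (∏ i, facX R (s i) (1 : R)) =
      ∑ t' ∈ (Finset.univ : Finset (Fin ℓ)).powerset,
        AddMonoidAlgebra.single (F t') ((-1 : R) ^ (Finset.univ \ t').card) := by
    have h0 : ∀ i : Fin ℓ, facX R (s i) (1 : R) =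
        (AddMonoidAlgebra.single ((↑(s i) : WithZero S)) (1 : R) : SAlg R S) +
          (AddMonoidAlgebra.single ((↑(eIdem S (s i)) : WithZero S)) (-1 : R) : SAlg R S) := by
      intro i
      rw [facX, Xm, Xm, sub_eq_add_neg, ← AddMonoidAlgebra.single_neg]
    rw [Finset.prod_congr rfl fun i _ => h0 i, Finset.prod_add]
    refine Finset.sum_congr rfl fun t' _ => ?_
    rw [prod_single_const, prod_single_const, AddMonoidAlgebra.single_mul_single,
      one_pow, one_mul, hF]
  have hz : (∑ t' ∈ (Finset.univ : Finset (Fin ℓ)).powerset,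
      (AddMonoidAlgebra.single (F t') ((-1 : R) ^ (Finset.univ \ t').card) : SAlg R S)) = 0 := by
    rw [← hexp2]; exact part1
  have happ : (∑ t' ∈ (Finset.univ : Finset (Fin ℓ)).powerset,
      (AddMonoidAlgebra.single (F t') ((-1 : R) ^ (Finset.univ \ t').card) : SAlg R S).coeff
        (↑e : WithZero S)) = 0 := by
    let ev : SAlg R S →+ R :=
      { toFun := fun φ => φ.coeff (↑e : WithZero S)
        map_zero' := rfl
        map_add' := fun f g => rfl }
    have h1 : ev (∑ t' ∈ (Finset.univ : Finset (Fin ℓ)).powerset,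
        (AddMonoidAlgebra.single (F t') ((-1 : R) ^ (Finset.univ \ t').card) : SAlg R S)) = 0 := by
      rw [hz]; rfl
    rw [map_sum] at h1
    exact h1
  have hsum := Finset.sum_eq_single_of_mem
    (s := (Finset.univ : Finset (Fin ℓ)).powerset)
    (f := fun t' => (AddMonoidAlgebra.single (F t')
      ((-1 : R) ^ (Finset.univ \ t').card) : SAlg R S).coeff (↑e : WithZero S))
    (∅ : Finset (Fin ℓ))
    (Finset.mem_powerset.mpr (Finset.empty_subset _))
    (fun t' _ hne => by
      have hne' : F t' ≠ (↑e : WithZero S) :=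
        claim1 t' (Finset.nonempty_iff_ne_empty.mpr hne)
      beta_reduce
      rw [AddMonoidAlgebra.coeff_single_apply, if_neg hne'])
  rw [hsum] at happ
  beta_reduce at happ
  have hF0 : F ∅ = (↑e : WithZero S) := by
    rw [hF]
    simp only [Finset.sum_empty, zero_add, Finset.sdiff_empty]
    exact he.symm
  rw [hF0, AddMonoidAlgebra.coeff_single_apply, if_pos rfl] at happ
  haveI : Nontrivial R := CharP.nontrivial_of_char_ne_one (v := p) hp.one_lt.ne'
  rcases Nat.even_or_odd ((Finset.univ \ (∅ : Finset (Fin ℓ))).card) with hpar | hpar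
  · rw [hpar.neg_one_pow] at happ
    exact one_ne_zero happ
  · rw [hpar.neg_one_pow] at happ
    exact neg_ne_zero.mpr one_ne_zero happ


end ZS
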